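/- The bisubmodular polyhedron P₊(f) is nonempty for any bisubmodular f with f(∅,∅)=0. -/

import Mathlib

open Finset

/-- The bisubmodular polyhedron `P₊(f)` is nonempty. -/
theorem polyhedron_nonempty {n : ℕ} (f : Finset (Fin n) → Finset (Fin n) → ℝ)
    (hbi : ∀ X₁ Y₁ X₂ Y₂ : Finset (Fin n), Disjoint X₁ Y₁ → Disjoint X₂ Y₂ →
      f ((X₁ ∪ X₂) \ (Y₁ ∪ Y₂)) ((Y₁ ∪ Y₂) \ (X₁ ∪ X₂)) + f (X₁ ∩ X₂) (Y₁ ∩ Y₂)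
        ≤ f X₁ Y₁ + f X₂ Y₂)
    (hf0 : f ∅ ∅ = 0) :
    {x : Fin n → ℝ | ∀ X Y : Finset (Fin n), Disjoint X Y →
      ∑ i ∈ X, x i - ∑ i ∈ Y, x i ≤ f X Y}.Nonempty := by
  classical
  set g : Finset (Fin n) → ℝ := fun S => f S ∅ with hg
  have hsub : ∀ A B : Finset (Fin n), g (A ∪ B) + g (A ∩ B) ≤ g A + g B := by
    intro A B
    have := hbi A ∅ B ∅ (disjoint_empty_right _) (disjoint_empty_right _)
    simpa [hg] using this
  set T : ℕ → Finset (Fin n) := fun j => univ.filter (fun i => i.val < j) with hT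
  have memT : ∀ (j : ℕ) (i : Fin n), i ∈ T j ↔ i.val < j := by
    intro j i; simp [hT]
  set x : Fin n → ℝ := fun i => g (T (i.val + 1)) - g (T i.val) with hx
  -- Lemma A : greedy point dominated by g
  have lemA : ∀ X : Finset (Fin n), ∑ i ∈ X, x i ≤ g X := by
    intro X
    induction X using Finset.induction_on_max with
    | empty => simp [hg, hf0]
    | insert a s hs ih =>
      have ha : a ∉ s := fun h => lt_irrefl a (hs a h)
      have hsT : s ⊆ T a.val := fun b hb => (memT a.val b).2 (hs b hb)
      have haT : a ∉ T a.val := by simp [memT]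
      have hu : insert a s ∪ T a.val = T (a.val + 1) := by
        ext i
        simp only [Finset.mem_union, Finset.mem_insert, memT]
        constructor
        · rintro ((rfl | h) | h)
          · omega
          · exact Nat.lt_succ_of_lt (hs i h)
          · omega
        · intro h
          rcases Nat.lt_succ_iff_lt_or_eq.1 h with h | h
          · exact Or.inr h
          · exact Or.inl (Or.inl (Fin.ext h))
      have hi : insert a s ∩ T a.val = s := by
        ext i
        simp only [Finset.mem_inter, Finset.mem_insert, memT]
        constructor
        · rintro ⟨rfl | h, h2⟩
          · omega
          · exact h
        · intro h; exact ⟨Or.inr h, hs i h⟩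
      have key := hsub (insert a s) (T a.val)
      rw [hu, hi] at key
      rw [Finset.sum_insert ha]
      have : x a = g (T (a.val + 1)) - g (T a.val) := rfl
      linarith [ih]
  -- Lemma B : marginal of removing Y from univ dominated by greedy sum
  have lemB : ∀ Y : Finset (Fin n), g univ - g (univ \ Y) ≤ ∑ i ∈ Y, x i := by
    intro Y
    induction Y using Finset.induction_on_min with
    | empty => simp
    | insert a s hs ih =>
      have ha : a ∉ s := fun h => lt_irrefl a (hs a h)
      set S : Finset (Fin n) := univ \ insert a s with hS
      have hSs : univ \ s = insert a S := by
        ext i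
        constructor
        · intro h
          have hns : i ∉ s := (Finset.mem_sdiff.1 h).2
          by_cases hia : i = a
          · exact hia ▸ Finset.mem_insert_self a S
          · refine Finset.mem_insert_of_mem (Finset.mem_sdiff.2 ⟨Finset.mem_univ i, ?_⟩)
            exact fun hc => (Finset.mem_insert.1 hc).elim hia hns
        · intro h
          rcases Finset.mem_insert.1 h with rfl | h
          · exact Finset.mem_sdiff.2 ⟨Finset.mem_univ _, ha⟩
          · have hns : i ∉ insert a s := (Finset.mem_sdiff.1 h).2
            exact Finset.mem_sdiff.2 ⟨Finset.mem_univ _,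
              fun hc => hns (Finset.mem_insert_of_mem hc)⟩
      have hTS : T a.val ⊆ S := by
        intro i hi
        have hiv : i.val < a.val := (memT a.val i).1 hi
        simp only [hS, Finset.mem_sdiff, Finset.mem_univ, true_and, Finset.mem_insert]
        rintro (rfl | h)
        · omega
        · exact absurd (hs i h) (by omega)
      have haS : a ∉ S := by simp [hS]
      have hu : S ∪ T (a.val + 1) = insert a S := by
        ext i
        simp only [Finset.mem_union, Finset.mem_insert, memT]
        constructor
        · rintro (h | h)
          · exact Or.inr h
          · rcases Nat.lt_succ_iff_lt_or_eq.1 h with h | h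
            · exact Or.inr (hTS ((memT a.val i).2 h))
            · exact Or.inl (Fin.ext h)
        · rintro (rfl | h)
          · exact Or.inr (by omega)
          · exact Or.inl h
      have hi : S ∩ T (a.val + 1) = T a.val := by
        ext i
        simp only [Finset.mem_inter, memT]
        constructor
        · rintro ⟨h1, h2⟩
          rcases Nat.lt_succ_iff_lt_or_eq.1 h2 with h | h
          · exact h
          · exact absurd (Fin.ext h : i = a) (fun hc => haS (hc ▸ h1))
        · intro h
          exact ⟨hTS ((memT a.val i).2 h), Nat.lt_succ_of_lt h⟩
      have key := hsub S (T (a.val + 1))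
      rw [hu, hi] at key
      rw [Finset.sum_insert ha]
      rw [hSs] at ih
      have : x a = g (T (a.val + 1)) - g (T a.val) := rfl
      linarith [ih]
  refine ⟨x, ?_⟩
  intro X Y hXY
  have key := hbi univ ∅ X Y (disjoint_empty_right _) hXY
  have h1 : (univ ∪ X) = (univ : Finset (Fin n)) := by simp
  have h2 : (∅ ∪ Y) = Y := by simp
  rw [h1, h2] at key
  have h3 : Y \ (univ : Finset (Fin n)) = ∅ := by simp
  have h4 : (univ : Finset (Fin n)) ∩ X = X := by simp
  have h5 : (∅ : Finset (Fin n)) ∩ Y = ∅ := by simp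
  rw [h3, h4, h5] at key
  -- key : f (univ \ Y) ∅ + f X ∅ ≤ f univ ∅ + f X Y
  have hA := lemA X
  have hB := lemB Y
  simp only [hg] at hA hB
  linarith
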